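/- Fix r ≥ 2. A non-decreasing finite sequence σ of positive integers is called normal if there exists k ≥ 0 such that every element lies in [r^k, r^{k+1}] and at most one element is not a power of r. If σ is normal and has length at least r, then the r-merge M_r(σ) (delete the first r elements and insert their sum, keeping the sequence non-decreasing) is also normal. -/

import Mathlib

attribute [local instance] Classical.propDecidable

/-- The r-merge operator: delete the first `r` elements of a non-decreasing
sequence and insert their sum in the appropriate position. -/
def rMerge (r : ℕ) (σ : List ℕ) : List ℕ :=
  List.orderedInsert (· ≤ ·) ((σ.take r).sum) (σ.drop r)

/-- `x` is a power of `r` (with `1 = r^0` counted as a power of `r`). -/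
def IsPowerOf (r x : ℕ) : Prop := ∃ j : ℕ, x = r ^ j

/-- A finite non-decreasing sequence of positive integers is *normal* if for
some `k ≥ 0` all its elements lie in `[r^k, r^(k+1)]` and at most one element
is not a power of `r`. -/
def IsNormalSeq (r : ℕ) (σ : List ℕ) : Prop :=
  ∃ k : ℕ, (∀ x ∈ σ, r ^ k ≤ x ∧ x ≤ r ^ (k + 1)) ∧
    (σ.countP (fun x => decide (¬ IsPowerOf r x))) ≤ 1

/-- If `σ` is a normal non-decreasing sequence of positive integers of length
at least `r`, then its r-merge is also normal. -/
theorem rMerge_normal (r : ℕ) (hr : 2 ≤ r) (σ : List ℕ)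
    (hsort : List.Pairwise (· ≤ ·) σ) (hpos : ∀ x ∈ σ, 0 < x)
    (hlen : r ≤ σ.length) (hnorm : IsNormalSeq r σ) :
    IsNormalSeq r (rMerge r σ) := by
  classical
  obtain ⟨k, hbound, hcount⟩ := hnorm
  have hr1 : 1 < r := hr
  set p : ℕ → Bool := fun x => decide (¬ IsPowerOf r x) with hp
  set t := σ.take r with ht
  set d := σ.drop r with hd
  have hσ : t ++ d = σ := List.take_append_drop r σ
  have htlen : t.length = r := by
    rw [ht, List.length_take]; omega
  have hperm : (rMerge r σ).Perm (t.sum :: d) :=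
    List.perm_orderedInsert _ _ _
  have htsub : ∀ x ∈ t, x ∈ σ := fun x hx => (List.take_sublist r σ).subset hx
  have hdsub : ∀ x ∈ d, x ∈ σ := fun x hx => (List.drop_sublist r σ).subset hx
  have hle : ∀ x ∈ t, ∀ y ∈ d, x ≤ y := by
    have hs2 : List.Pairwise (· ≤ ·) (t ++ d) := by rw [hσ]; exact hsort
    exact (List.pairwise_append.mp hs2).2.2
  have hslb : r ^ (k + 1) ≤ t.sum := by
    have := List.card_nsmul_le_sum (l := t) (n := r ^ k)
      (fun x hx => (hbound x (htsub x hx)).1)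
    rw [htlen, smul_eq_mul] at this
    calc r ^ (k + 1) = r * r ^ k := by ring
    _ ≤ t.sum := this
  have hsub2 : t.sum ≤ r ^ (k + 2) := by
    have := List.sum_le_card_nsmul t (r ^ (k + 1))
      (fun x hx => (hbound x (htsub x hx)).2)
    rw [htlen, smul_eq_mul] at this
    calc t.sum ≤ r * r ^ (k + 1) := this
    _ = r ^ (k + 2) := by ring
  have hcnt : (rMerge r σ).countP p = (if p t.sum then 1 else 0) + d.countP p := by
    rw [hperm.countP_eq, List.countP_cons]
    by_cases h : p t.sum = true <;> simp [h] <;> omega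
  have hcntsplit : t.countP p + d.countP p ≤ 1 := by
    rw [← List.countP_append, hσ]; exact hcount
  have hmemM : ∀ x ∈ rMerge r σ, x = t.sum ∨ x ∈ d := by
    intro x hx
    have := hperm.mem_iff.mp hx
    simpa using this
  have hppow : ∀ x, IsPowerOf r x → p x = false := by
    intro x hx; simp [hp, hx]
  by_cases hcase : ∃ y ∈ d, y < r ^ (k + 1)
  · obtain ⟨y, hyd, hylt⟩ := hcase
    have hyk : r ^ k ≤ y := (hbound y (hdsub y hyd)).1
    -- all elements of t equal r ^ k
    have hall : ∀ x ∈ t, x = r ^ k := by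
      intro x hx
      have hxy : x ≤ y := hle x hx y hyd
      have hxk : r ^ k ≤ x := (hbound x (htsub x hx)).1
      by_cases hxp : IsPowerOf r x
      · obtain ⟨j, rfl⟩ := hxp
        have h1 : j < k + 1 := (pow_lt_pow_iff_right₀ hr1).mp (lt_of_le_of_lt hxy hylt)
        have h2 : k ≤ j := (pow_le_pow_iff_right₀ hr1).mp hxk
        have : j = k := by omega
        rw [this]
      · exfalso
        by_cases hyp : IsPowerOf r y
        · obtain ⟨j, rfl⟩ := hyp
          have h1 : j < k + 1 := (pow_lt_pow_iff_right₀ hr1).mp hylt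
          have h2 : k ≤ j := (pow_le_pow_iff_right₀ hr1).mp hyk
          have hj : j = k := by omega
          subst hj
          exact hxp ⟨j, le_antisymm hxy hxk⟩
        · have h1 : 0 < t.countP p := List.countP_pos_iff.mpr ⟨x, hx, by simp [hp, hxp]⟩
          have h2 : 0 < d.countP p := List.countP_pos_iff.mpr ⟨y, hyd, by simp [hp, hyp]⟩
          omega
    have hsum : t.sum = r ^ (k + 1) := by
      rw [List.sum_eq_card_nsmul t (r ^ k) hall, htlen, smul_eq_mul]; ring
    refine ⟨k, ?_, ?_⟩
    · intro x hx
      rcases hmemM x hx with rfl | hxd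
      · rw [hsum]
        exact ⟨pow_le_pow_right₀ (le_of_lt hr1) (Nat.le_succ k), le_refl _⟩
      · exact hbound x (hdsub x hxd)
    · rw [hcnt, hppow t.sum ⟨k + 1, hsum⟩]
      simp only [Bool.false_eq_true, if_false, zero_add]
      omega
  · push_neg at hcase
    refine ⟨k + 1, ?_, ?_⟩
    · intro x hx
      rcases hmemM x hx with rfl | hxd
      · exact ⟨hslb, hsub2⟩
      · refine ⟨hcase x hxd, ?_⟩
        calc x ≤ r ^ (k + 1) := (hbound x (hdsub x hxd)).2
        _ ≤ r ^ (k + 2) := pow_le_pow_right₀ (le_of_lt hr1) (by omega)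
    · have hd0 : d.countP p = 0 := by
        rw [List.countP_eq_zero]
        intro y hyd
        have : y = r ^ (k + 1) := le_antisymm (hbound y (hdsub y hyd)).2 (hcase y hyd)
        simp [hp, IsPowerOf, this]
      rw [hcnt, hd0]
      split <;> omega
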